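/- Every 3×3×3 quaternion tensor T : Fin 3 → Fin 3 → Fin 3 → ℍ has rank at most 6, i.e. T can be written as a sum of 6 simple tensors. -/

import Mathlib

noncomputable section

abbrev Hq := Quaternion ℝ
abbrev Vec3 := Fin 3 → Hq
abbrev Mat3 := Fin 3 → Fin 3 → Hq

namespace R6


def mulM (A B : Mat3) : Mat3 := fun i k => ∑ j, A i j * B j k

def oneM : Mat3 := fun i k => if i = k then 1 else 0

theorem mulM_assoc (A B C : Mat3) : mulM (mulM A B) C = mulM A (mulM B C) := by
  funext i k
  simp only [mulM, Finset.sum_mul, Finset.mul_sum, mul_assoc]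
  exact Finset.sum_comm

theorem mulM_one (A : Mat3) : mulM A oneM = A := by
  funext i k
  simp [mulM, oneM, Finset.sum_ite_eq, mul_ite]

theorem one_mulM (A : Mat3) : mulM oneM A = A := by
  funext i k
  simp [mulM, oneM, Finset.sum_ite_eq, ite_mul]

/-- row-vector times matrix, as a left `Hq`-linear map -/
def rowMul (M : Mat3) : Vec3 →ₗ[Hq] Vec3 where
  toFun w := fun k => ∑ i, w i * M i k
  map_add' w v := by funext k; simp [add_mul, Finset.sum_add_distrib]
  map_smul' a w := by
    funext k
    simp only [Pi.smul_apply, smul_eq_mul, RingHom.id_apply, Finset.mul_sum, mul_assoc]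

/-- Every 3×3 quaternion matrix is either (two-sided) invertible or has a
nonzero left kernel row vector. -/
theorem dichotomy (M : Mat3) :
    (∃ N : Mat3, mulM M N = oneM ∧ mulM N M = oneM) ∨
      (∃ w : Vec3, w ≠ 0 ∧ ∀ k, ∑ i, w i * M i k = 0) := by
  by_cases hinj : Function.Injective (rowMul M)
  · left
    have hsurj : Function.Surjective (rowMul M) :=
      (LinearMap.injective_iff_surjective).mp hinj
    choose n hn using fun i : Fin 3 => hsurj (fun k => if i = k then 1 else 0)
    set N : Mat3 := fun i k => n i k with hNdef
    have hNM : mulM N M = oneM := by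
      funext i k
      have := congrFun (hn i) k
      simpa [rowMul, mulM, oneM] using this
    have hMNM : mulM (mulM M N) M = M := by rw [mulM_assoc, hNM, mulM_one]
    have hMN : mulM M N = oneM := by
      funext i k
      have key : rowMul M (fun k => mulM M N i k) = rowMul M (fun k => oneM i k) := by
        funext k'
        have h1 : ∑ x, mulM M N i x * M x k' = M i k' := by
          have := congrFun (congrFun hMNM i) k'
          simpa [mulM] using this
        simp only [rowMul, LinearMap.coe_mk, AddHom.coe_mk]
        rw [h1]
        simp [oneM, ite_mul]
      have := hinj key
      exact congrFun this k
    exact ⟨N, hMN, hNM⟩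
  · right
    rw [injective_iff_map_eq_zero] at hinj
    push_neg at hinj
    obtain ⟨w, hw0, hwne⟩ := hinj
    exact ⟨w, hwne, fun k => congrFun hw0 k⟩



/-- the three target "eigenvalues" 1+i, 2+i, 3+i -/
def om : Fin 3 → Hq := ![⟨1,1,0,0⟩, ⟨2,1,0,0⟩, ⟨3,1,0,0⟩]
/-- their conjugates -/
def omb : Fin 3 → Hq := ![⟨1,-1,0,0⟩, ⟨2,-1,0,0⟩, ⟨3,-1,0,0⟩]
/-- norms squared -/
def omn : Fin 3 → ℝ := ![2, 5, 10]
/-- traces -/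
def omm : Fin 3 → ℝ := ![2, 4, 6]

theorem omb_mul (t : Fin 3) : omb t * om t = ((omn t : ℝ) : Hq) := by
  fin_cases t <;>
    · apply Quaternion.ext <;> simp only [Quaternion.re_mul, Quaternion.imI_mul, Quaternion.imJ_mul, Quaternion.imK_mul] <;>
        simp [om, omb, omn, Quaternion.re_mul, Quaternion.imI_mul, Quaternion.imJ_mul,
          Quaternion.imK_mul] <;> norm_num

theorem om_add_omb (t : Fin 3) : om t + omb t = ((omm t : ℝ) : Hq) := by
  fin_cases t <;>
    · apply Quaternion.ext <;> simp only [Quaternion.re_add, Quaternion.imI_add, Quaternion.imJ_add, Quaternion.imK_add] <;> simp [om, omb, omm] <;> norm_num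

/-- Sylvester constants q s t = (om s)^2 - omm t * om s + omn t -/
def sylQ (s t : Fin 3) : Hq := om s * om s - ((omm t : ℝ) : Hq) * om s + ((omn t : ℝ) : Hq)

/-- inverses of the Sylvester constants (for s ≠ t) -/
def sylQi : Fin 3 → Fin 3 → Hq :=
  ![![0, ⟨1/5, 2/5, 0, 0⟩, ⟨1/8, 1/8, 0, 0⟩],
    ![⟨1/5, -2/5, 0, 0⟩, 0, ⟨1/5, 2/5, 0, 0⟩],
    ![⟨1/8, -1/8, 0, 0⟩, ⟨1/5, -2/5, 0, 0⟩, 0]]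

theorem sylQ_mul_sylQi (s t : Fin 3) (h : s ≠ t) : sylQ s t * sylQi s t = 1 := by
  fin_cases s <;> fin_cases t <;> simp_all <;>
    · apply Quaternion.ext <;> simp only [sylQ, Quaternion.re_mul, Quaternion.imI_mul, Quaternion.imJ_mul, Quaternion.imK_mul, Quaternion.re_add, Quaternion.imI_add, Quaternion.imJ_add, Quaternion.imK_add,
          Quaternion.re_sub, Quaternion.imI_sub, Quaternion.imJ_sub, Quaternion.imK_sub,
          Quaternion.re_coe, Quaternion.imI_coe, Quaternion.imJ_coe, Quaternion.imK_coe,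
          Quaternion.re_one, Quaternion.imI_one, Quaternion.imJ_one, Quaternion.imK_one] <;>
        simp [sylQ, sylQi, om, omm, omn, Quaternion.re_mul, Quaternion.imI_mul,
          Quaternion.imJ_mul, Quaternion.imK_mul] <;> norm_num


theorem norm_le_of_sq (q : Hq) (b : ℝ) (hb : 0 ≤ b)
    (h : Quaternion.normSq q ≤ b * b) : ‖q‖ ≤ b := by
  have h2 : ‖q‖ * ‖q‖ ≤ b * b := by
    rw [← Quaternion.normSq_eq_norm_mul_self]; exact h
  nlinarith [norm_nonneg q]

theorem norm_om_le (t : Fin 3) : ‖om t‖ ≤ 4 := by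
  fin_cases t <;>
    · apply norm_le_of_sq _ _ (by norm_num)
      simp only [Quaternion.normSq_def']
      simp [om, Quaternion.normSq_def'] <;> norm_num

theorem norm_omb_le (t : Fin 3) : ‖omb t‖ ≤ 4 := by
  fin_cases t <;>
    · apply norm_le_of_sq _ _ (by norm_num)
      simp only [Quaternion.normSq_def']
      simp [omb, Quaternion.normSq_def'] <;> norm_num

theorem norm_sylQi_le (s t : Fin 3) : ‖sylQi s t‖ ≤ 1 := by
  fin_cases s <;> fin_cases t <;>
    · apply norm_le_of_sq _ _ (by norm_num)
      simp only [Quaternion.normSq_def']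
      simp [sylQi, Quaternion.normSq_def', Quaternion.re_zero, Quaternion.imI_zero,
        Quaternion.imJ_zero, Quaternion.imK_zero] <;> norm_num

/-- solution of x * om t - om s * x = c -/
def sylSolve (s t : Fin 3) (c : Hq) : Hq :=
  (sylQi s t * c) * omb t - om s * (sylQi s t * c)

theorem syl_core (ω ωb ν c : Hq) (n m : ℝ) (h1 : ωb * ω = ((n : ℝ) : Hq))
    (h2 : ω + ωb = ((m : ℝ) : Hq)) (q qi : Hq)
    (hq : q = ν * ν - ((m : ℝ) : Hq) * ν + ((n : ℝ) : Hq)) (hqi : q * qi = 1) :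
    ((qi * c) * ωb - ν * (qi * c)) * ω - ν * ((qi * c) * ωb - ν * (qi * c)) = c := by
  set u := qi * c with hu
  have e1 : (u * ωb - ν * u) * ω - ν * (u * ωb - ν * u) =
      u * (ωb * ω) - ν * (u * (ω + ωb)) + ν * (ν * u) := by noncomm_ring
  rw [e1, h1, h2, ← Quaternion.coe_commutes n u, ← Quaternion.coe_commutes m u]
  have e2 : ν * (((m : ℝ) : Hq) * u) = (((m : ℝ) : Hq) * ν) * u := by
    rw [← mul_assoc, Quaternion.coe_commutes]
  rw [e2]
  have e3 : ((n : ℝ) : Hq) * u - (((m : ℝ) : Hq) * ν) * u + ν * (ν * u) =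
      (ν * ν - ((m : ℝ) : Hq) * ν + ((n : ℝ) : Hq)) * u := by noncomm_ring
  rw [e3, ← hq, hu, ← mul_assoc, hqi, one_mul]

theorem sylSolve_spec (s t : Fin 3) (h : s ≠ t) (c : Hq) :
    (sylSolve s t c) * om t - om s * (sylSolve s t c) = c := by
  apply syl_core (om t) (omb t) (om s) c (omn t) (omm t) (omb_mul t) (om_add_omb t)
    (sylQ s t) (sylQi s t)
  · rfl
  · exact sylQ_mul_sylQi s t h

theorem sylSolve_norm (s t : Fin 3) (c : Hq) : ‖sylSolve s t c‖ ≤ 8 * ‖c‖ := by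
  have h1 : ‖(sylQi s t * c) * omb t‖ ≤ 4 * ‖c‖ := by
    rw [norm_mul, norm_mul]
    have h := mul_le_mul (mul_le_mul (norm_sylQi_le s t) le_rfl (norm_nonneg c)
      zero_le_one) (norm_omb_le t) (norm_nonneg _) (by positivity)
    nlinarith [norm_nonneg c]
  have h2 : ‖om s * (sylQi s t * c)‖ ≤ 4 * ‖c‖ := by
    rw [norm_mul, norm_mul]
    have h := mul_le_mul (norm_om_le s) (mul_le_mul (norm_sylQi_le s t) le_rfl
      (norm_nonneg c) zero_le_one) (by positivity) (by norm_num)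
    nlinarith [norm_nonneg c]
  calc ‖sylSolve s t c‖ ≤ ‖(sylQi s t * c) * omb t‖ + ‖om s * (sylQi s t * c)‖ :=
        norm_sub_le _ _
    _ ≤ 8 * ‖c‖ := by linarith



/-- diagonal matrix -/
def dg (d : Vec3) : Mat3 := fun i k => if i = k then d i else 0
/-- A * diag d -/
def muld (A : Mat3) (d : Vec3) : Mat3 := fun i k => A i k * d k
/-- diag d * A -/
def dmul (d : Vec3) (A : Mat3) : Mat3 := fun i k => d i * A i k

theorem mulM_dg (A : Mat3) (d : Vec3) : mulM A (dg d) = muld A d := by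
  funext i k; simp [mulM, dg, muld, mul_ite, Finset.sum_ite_eq]

theorem dg_mulM (d : Vec3) (A : Mat3) : mulM (dg d) A = dmul d A := by
  funext i k; simp [mulM, dg, dmul, ite_mul, Finset.sum_ite_eq]

theorem mulM_add_left (A B C : Mat3) : mulM (A + B) C = mulM A C + mulM B C := by
  funext i k; simp [mulM, add_mul, Finset.sum_add_distrib]

theorem mulM_add_right (A B C : Mat3) : mulM A (B + C) = mulM A B + mulM A C := by
  funext i k; simp [mulM, mul_add, Finset.sum_add_distrib]

theorem mulM_sub_right (A B C : Mat3) : mulM A (B - C) = mulM A B - mulM A C := by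
  funext i k; simp [mulM, mul_sub, Finset.sum_sub_distrib]

theorem mulM_smul_left (r : ℝ) (A B : Mat3) : mulM (r • A) B = r • mulM A B := by
  funext i k
  simp only [mulM, Pi.smul_apply, Finset.smul_sum]
  exact Finset.sum_congr rfl fun j _ => by rw [smul_mul_assoc]

theorem muld_add_left (A B : Mat3) (d : Vec3) : muld (A + B) d = muld A d + muld B d := by
  funext i k; simp [muld, add_mul]

theorem muld_sub_left (A B : Mat3) (d : Vec3) : muld (A - B) d = muld A d - muld B d := by
  funext i k; simp [muld, sub_mul]

theorem muld_smul_left (r : ℝ) (A : Mat3) (d : Vec3) : muld (r • A) d = r • muld A d := by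
  funext i k; simp [muld, smul_mul_assoc]

theorem muld_one (d : Vec3) : muld oneM d = dg d := by
  funext i k
  simp only [muld, oneM, dg, ite_mul, one_mul, zero_mul]
  by_cases h : i = k <;> simp [h]

theorem dmul_one (d : Vec3) : dmul d oneM = dg d := by
  funext i k
  simp only [dmul, oneM, dg, mul_ite, mul_one, mul_zero]

theorem dmul_add_right (d : Vec3) (A B : Mat3) : dmul d (A + B) = dmul d A + dmul d B := by
  funext i k; simp [dmul, mul_add]

-- norms
theorem entry_le (A : Mat3) (i k : Fin 3) : ‖A i k‖ ≤ ‖A‖ :=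
  le_trans (norm_le_pi_norm (A i) k) (norm_le_pi_norm A i)

theorem ventry_le (v : Vec3) (i : Fin 3) : ‖v i‖ ≤ ‖v‖ := norm_le_pi_norm v i

theorem mat_norm_le {A : Mat3} {r : ℝ} (hr : 0 ≤ r) (h : ∀ i k, ‖A i k‖ ≤ r) : ‖A‖ ≤ r := by
  rw [pi_norm_le_iff_of_nonneg hr]
  intro i
  rw [pi_norm_le_iff_of_nonneg hr]
  exact h i

theorem norm_mulM (A B : Mat3) : ‖mulM A B‖ ≤ 3 * ‖A‖ * ‖B‖ := by
  have hA := norm_nonneg A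
  have hB := norm_nonneg B
  apply mat_norm_le (by positivity)
  intro i k
  have hterm : ∀ j : Fin 3, ‖A i j * B j k‖ ≤ ‖A‖ * ‖B‖ := fun j => by
    rw [norm_mul]
    exact mul_le_mul (entry_le A i j) (entry_le B j k) (norm_nonneg _) hA
  calc ‖∑ j, A i j * B j k‖ ≤ ∑ j, ‖A i j * B j k‖ := norm_sum_le _ _
    _ ≤ ∑ _j : Fin 3, ‖A‖ * ‖B‖ := Finset.sum_le_sum fun j _ => hterm j
    _ = 3 * ‖A‖ * ‖B‖ := by rw [Finset.sum_const]; simp; ring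

theorem norm_muld (A : Mat3) (d : Vec3) : ‖muld A d‖ ≤ ‖A‖ * ‖d‖ := by
  apply mat_norm_le (by positivity)
  intro i k
  rw [muld, norm_mul]
  exact mul_le_mul (entry_le A i k) (ventry_le d k) (norm_nonneg _) (norm_nonneg _)

theorem norm_dmul (d : Vec3) (A : Mat3) : ‖dmul d A‖ ≤ ‖d‖ * ‖A‖ := by
  apply mat_norm_le (by positivity)
  intro i k
  rw [dmul, norm_mul]
  exact mul_le_mul (ventry_le d i) (entry_le A i k) (norm_nonneg _) (norm_nonneg _)

theorem norm_oneM : ‖(oneM : Mat3)‖ ≤ 1 := by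
  apply mat_norm_le zero_le_one
  intro i k
  by_cases h : i = k <;> simp [oneM, h]


-- ## The linear operator and its inverse

def Lop (U : Mat3) (E : Vec3) : Mat3 := muld U om - dmul om U - dg E

def Linv (C : Mat3) : Mat3 × Vec3 :=
  (fun i k => if i = k then 0 else sylSolve i k (C i k), fun s => -(C s s))

theorem Lop_Linv (C : Mat3) : Lop (Linv C).1 (Linv C).2 = C := by
  funext i k
  simp only [Lop, Linv, muld, dmul, dg, Pi.sub_apply]
  by_cases h : i = k
  · subst h; simp
  · simp only [if_neg h]
    have := sylSolve_spec i k h (C i k)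
    rw [sub_zero]
    exact this

theorem sylSolve_sub (s t : Fin 3) (c c' : Hq) :
    sylSolve s t c - sylSolve s t c' = sylSolve s t (c - c') := by
  simp only [sylSolve, mul_sub, sub_mul]
  noncomm_ring

theorem Linv_sub (C C' : Mat3) : Linv C - Linv C' = Linv (C - C') := by
  have h1 : (Linv C - Linv C').1 = (Linv (C - C')).1 := by
    funext i k
    by_cases h : i = k <;>
      simp [Linv, h, sylSolve_sub]
  have h2 : (Linv C - Linv C').2 = (Linv (C - C')).2 := by
    funext s2
    simp [Linv]
    abel
  exact Prod.ext h1 h2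

theorem norm_Linv (C : Mat3) : ‖Linv C‖ ≤ 8 * ‖C‖ := by
  have h8 : (0:ℝ) ≤ 8 * ‖C‖ := by positivity
  rw [Prod.norm_def]
  apply max_le
  · apply mat_norm_le h8
    intro i k
    by_cases h : i = k
    · simp only [Linv, if_pos h, norm_zero]; positivity
    · simp only [Linv, if_neg h]
      refine le_trans (sylSolve_norm i k _) ?_
      have := entry_le C i k
      nlinarith [norm_nonneg (C i k)]
  · rw [pi_norm_le_iff_of_nonneg h8]
    intro s2
    simp only [Linv, norm_neg]
    have := entry_le C s2 s2
    nlinarith [norm_nonneg C]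

theorem norm_om_vec : ‖(om : Vec3)‖ ≤ 4 := by
  rw [pi_norm_le_iff_of_nonneg (by norm_num)]
  exact norm_om_le

theorem dmul_bilin (E E' : Vec3) (U U' : Mat3) :
    dmul E U - dmul E' U' = dmul E (U - U') + dmul (E - E') U' := by
  funext i k
  simp only [dmul, Pi.sub_apply, Pi.add_apply]
  noncomm_ring

-- ## Existence of the approximate simultaneous diagonalization

theorem solveA (G' H' : Mat3) :
    ∃ (ε : ℝ) (U : Mat3) (E : Vec3), 0 < ε ∧
      ε * (‖G'‖ + ‖H'‖ + 1) ≤ 1/100000 ∧ ‖U‖ ≤ 1/100 ∧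
      mulM (mulM (oneM + ε • G') (oneM + U)) (dg om) =
        mulM (ε • H' + (dg om + dg E)) (oneM + U) := by
  have hbG := norm_nonneg G'
  have hbH := norm_nonneg H'
  obtain ⟨b, hbdef⟩ : ∃ x : ℝ, x = ‖G'‖ + ‖H'‖ + 1 := ⟨_, rfl⟩
  have hb1 : 1 ≤ b := by rw [hbdef]; linarith
  have hbpos : 0 < b := lt_of_lt_of_le one_pos hb1
  obtain ⟨ε, hedef⟩ : ∃ x : ℝ, x = 1/(100000 * b) := ⟨_, rfl⟩
  have hεpos : 0 < ε := by rw [hedef]; positivity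
  have hεb : ε * b = 1/100000 := by
    rw [hedef]; field_simp
  obtain ⟨Ψ, hΨdef⟩ : ∃ F : Mat3 → Mat3,
      F = fun U => muld (mulM G' (oneM + U)) om - mulM H' (oneM + U) := ⟨_, rfl⟩
  obtain ⟨φ, hφdef⟩ : ∃ F : Mat3 × Vec3 → Mat3 × Vec3,
      F = fun p => Linv (dmul p.2 p.1 - ε • Ψ p.1) := ⟨_, rfl⟩
  -- norm bound for Ψ
  have hΨnorm : ∀ U : Mat3, ‖U‖ ≤ 1 → ‖Ψ U‖ ≤ 30 * b := by
    intro U hU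
    simp only [hΨdef]
    have h1 : ‖oneM + U‖ ≤ 2 := le_trans (norm_add_le _ _) (by linarith [norm_oneM])
    have h2 : ‖mulM G' (oneM + U)‖ ≤ 3 * ‖G'‖ * 2 :=
      le_trans (norm_mulM _ _) (by nlinarith)
    have h3 : ‖muld (mulM G' (oneM + U)) om‖ ≤ (3 * ‖G'‖ * 2) * 4 := by
      refine le_trans (norm_muld _ _) ?_
      have := norm_om_vec
      nlinarith [norm_nonneg (mulM G' (oneM + U))]
    have h4 : ‖mulM H' (oneM + U)‖ ≤ 3 * ‖H'‖ * 2 :=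
      le_trans (norm_mulM _ _) (by nlinarith)
    refine le_trans (norm_sub_le _ _) ?_
    simp only [hbdef]
    nlinarith
  -- Lipschitz bound for Ψ
  have hΨlip : ∀ U U' : Mat3, ‖Ψ U - Ψ U'‖ ≤ 15 * b * ‖U - U'‖ := by
    intro U U'
    have key : Ψ U - Ψ U' = muld (mulM G' (U - U')) om - mulM H' (U - U') := by
      simp only [hΨdef]
      have e1 : mulM G' (oneM + U) - mulM G' (oneM + U') = mulM G' (U - U') := by
        rw [← mulM_sub_right]; congr 1; abel
      have e2 : mulM H' (oneM + U) - mulM H' (oneM + U') = mulM H' (U - U') := by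
        rw [← mulM_sub_right]; congr 1; abel
      rw [← e1, ← e2, muld_sub_left]
      abel
    rw [key]
    have h2 : ‖mulM G' (U - U')‖ ≤ 3 * ‖G'‖ * ‖U - U'‖ := norm_mulM _ _
    have h3 : ‖muld (mulM G' (U - U')) om‖ ≤ (3 * ‖G'‖ * ‖U - U'‖) * 4 := by
      refine le_trans (norm_muld _ _) ?_
      have := norm_om_vec
      nlinarith [norm_nonneg (mulM G' (U - U')), norm_nonneg (U - U')]
    have h4 : ‖mulM H' (U - U')‖ ≤ 3 * ‖H'‖ * ‖U - U'‖ := norm_mulM _ _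
    refine le_trans (norm_sub_le _ _) ?_
    simp only [hbdef]
    nlinarith [norm_nonneg (U - U')]
  -- the invariant ball
  obtain ⟨S, hSdef⟩ : ∃ s : Set (Mat3 × Vec3), s = Metric.closedBall 0 (1/100) := ⟨_, rfl⟩
  have hmem : ∀ p : Mat3 × Vec3, p ∈ S ↔ ‖p‖ ≤ 1/100 := by
    intro p
    rw [hSdef, Metric.mem_closedBall, dist_zero_right]
  have hUnorm : ∀ p : Mat3 × Vec3, p ∈ S → ‖p.1‖ ≤ 1/100 ∧ ‖p.2‖ ≤ 1/100 := by
    intro p hp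
    rw [hmem] at hp
    exact ⟨le_trans (norm_fst_le p) hp, le_trans (norm_snd_le p) hp⟩
  -- φ maps S into S
  have hmaps : ∀ p ∈ S, φ p ∈ S := by
    intro p hp
    obtain ⟨hp1, hp2⟩ := hUnorm p hp
    rw [hmem, hφdef]
    refine le_trans (norm_Linv _) ?_
    have hd : ‖dmul p.2 p.1 - ε • Ψ p.1‖ ≤ ‖p.2‖ * ‖p.1‖ + ε * (30 * b) := by
      refine le_trans (norm_sub_le _ _) ?_
      have h1 : ‖dmul p.2 p.1‖ ≤ ‖p.2‖ * ‖p.1‖ := norm_dmul _ _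
      have h2 : ‖ε • Ψ p.1‖ ≤ ε * (30 * b) := by
        rw [norm_smul, Real.norm_eq_abs, abs_of_pos hεpos]
        exact mul_le_mul_of_nonneg_left (hΨnorm p.1 (le_trans hp1 (by norm_num)))
          (le_of_lt hεpos)
      linarith
    have hεb30 : ε * (30 * b) ≤ 30/100000 := by
      rw [show ε * (30 * b) = 30 * (ε * b) by ring, hεb]; norm_num
    have t0 : ‖p.2‖ * ‖p.1‖ ≤ (1/100) * (1/100) :=
      mul_le_mul hp2 hp1 (norm_nonneg _) (by norm_num)
    have t1 := mul_le_mul_of_nonneg_left hd (by norm_num : (0:ℝ) ≤ 8)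
    linarith
  -- contraction estimate
  have hcontr : ∀ p ∈ S, ∀ q ∈ S, dist (φ p) (φ q) ≤ (1/2) * dist p q := by
    intro p hp q hq
    obtain ⟨hp1, hp2⟩ := hUnorm p hp
    obtain ⟨hq1, hq2⟩ := hUnorm q hq
    rw [dist_eq_norm (φ p) (φ q), dist_eq_norm p q]
    have hsub : φ p - φ q =
        Linv ((dmul p.2 p.1 - ε • Ψ p.1) - (dmul q.2 q.1 - ε • Ψ q.1)) := by
      rw [hφdef]
      exact Linv_sub _ _
    rw [hsub]
    refine le_trans (norm_Linv _) ?_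
    have hD : ‖(dmul p.2 p.1 - ε • Ψ p.1) - (dmul q.2 q.1 - ε • Ψ q.1)‖ ≤
        ‖p.2‖ * ‖p.1 - q.1‖ + ‖p.2 - q.2‖ * ‖q.1‖ + ε * (15 * b * ‖p.1 - q.1‖) := by
      have e1 : (dmul p.2 p.1 - ε • Ψ p.1) - (dmul q.2 q.1 - ε • Ψ q.1) =
          (dmul p.2 (p.1 - q.1) + dmul (p.2 - q.2) q.1) - ε • (Ψ p.1 - Ψ q.1) := by
        rw [← dmul_bilin, smul_sub]; abel
      rw [e1]
      refine le_trans (norm_sub_le _ _) ?_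
      have h1 : ‖dmul p.2 (p.1 - q.1) + dmul (p.2 - q.2) q.1‖ ≤
          ‖p.2‖ * ‖p.1 - q.1‖ + ‖p.2 - q.2‖ * ‖q.1‖ :=
        le_trans (norm_add_le _ _) (add_le_add (norm_dmul _ _) (norm_dmul _ _))
      have h2 : ‖ε • (Ψ p.1 - Ψ q.1)‖ ≤ ε * (15 * b * ‖p.1 - q.1‖) := by
        rw [norm_smul, Real.norm_eq_abs, abs_of_pos hεpos]
        exact mul_le_mul_of_nonneg_left (hΨlip _ _) (le_of_lt hεpos)
      linarith
    refine le_trans (mul_le_mul_of_nonneg_left hD (by norm_num : (0:ℝ) ≤ 8)) ?_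
    have k1 : ‖p.1 - q.1‖ ≤ ‖p - q‖ := norm_fst_le (p - q)
    have k2 : ‖p.2 - q.2‖ ≤ ‖p - q‖ := norm_snd_le (p - q)
    have hεb15 : ε * (15 * b) ≤ 15/100000 := by
      rw [show ε * (15 * b) = 15 * (ε * b) by ring, hεb]; norm_num
    have t1 : ‖p.2‖ * ‖p.1 - q.1‖ ≤ (1/100) * ‖p - q‖ :=
      mul_le_mul hp2 k1 (norm_nonneg _) (by norm_num)
    have t2 : ‖p.2 - q.2‖ * ‖q.1‖ ≤ ‖p - q‖ * (1/100) :=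
      mul_le_mul k2 hq1 (norm_nonneg _) (norm_nonneg _)
    have t3 : ε * (15 * b * ‖p.1 - q.1‖) ≤ (15/100000) * ‖p - q‖ := by
      rw [show ε * (15 * b * ‖p.1 - q.1‖) = (ε * (15 * b)) * ‖p.1 - q.1‖ by ring]
      exact mul_le_mul hεb15 k1 (norm_nonneg _) (by norm_num)
    have k0 : (0:ℝ) ≤ ‖p - q‖ := norm_nonneg _
    linarith
  -- set up the contraction on the subtype
  have hS0 : (0 : Mat3 × Vec3) ∈ S := by rw [hmem, norm_zero]; norm_num
  have hclosed : IsClosed S := by rw [hSdef]; exact Metric.isClosed_closedBall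
  have : CompleteSpace S := hclosed.completeSpace_coe
  have : Nonempty S := ⟨⟨0, hS0⟩⟩
  obtain ⟨φ', hφ'def⟩ : ∃ F : S → S, F = fun p => (⟨φ p.1, hmaps p.1 p.2⟩ : S) := ⟨_, rfl⟩
  have hcw : ContractingWith (1/2) φ' := by
    constructor
    · rw [← NNReal.coe_lt_coe]; norm_num
    · apply LipschitzWith.of_dist_le_mul
      intro p q
      have h := hcontr p.1 p.2 q.1 q.2
      calc dist (φ' p) (φ' q) = dist (φ p.1) (φ q.1) := by
            rw [hφ'def, Subtype.dist_eq]
        _ ≤ (1/2) * dist p.1 q.1 := h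
        _ = ((1/2 : NNReal) : ℝ) * dist p q := by rw [← Subtype.dist_eq]; norm_num
  obtain ⟨w, hfix⟩ : ∃ w : S, φ' w = w := ⟨_, hcw.fixedPoint_isFixedPt⟩
  have hfix' : φ (w : Mat3 × Vec3) = (w : Mat3 × Vec3) := by
    have := congrArg Subtype.val hfix
    rw [hφ'def] at this
    exact this
  obtain ⟨p, hpdef⟩ : ∃ p : Mat3 × Vec3, p = (w : Mat3 × Vec3) := ⟨_, rfl⟩
  refine ⟨ε, p.1, p.2, hεpos, ?_, ?_, ?_⟩
  · rw [← hbdef]; exact le_of_eq hεb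
  · rw [hpdef]; exact (hUnorm _ w.2).1
  · -- derive the key identity from the fixed point equation
    have hLinv : Linv (dmul p.2 p.1 - ε • Ψ p.1) = p := by
      rw [hpdef]
      have h2 := hfix'
      rw [hφdef] at h2
      exact h2
    have hL : Lop p.1 p.2 = dmul p.2 p.1 - ε • Ψ p.1 := by
      have h0 := Lop_Linv (dmul p.2 p.1 - ε • Ψ p.1)
      rw [hLinv] at h0
      exact h0
    have hL' : muld p.1 om - dmul om p.1 - dg p.2 =
        dmul p.2 p.1 - (ε • muld (mulM G' (oneM + p.1)) om -
          ε • mulM H' (oneM + p.1)) := by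
      have h2 := hL
      simp only [hΨdef, Lop] at h2
      rw [smul_sub] at h2
      exact h2
    have exL : mulM (mulM (oneM + ε • G') (oneM + p.1)) (dg om) =
        (dg om + muld p.1 om) + ε • muld (mulM G' (oneM + p.1)) om := by
      rw [mulM_add_left, one_mulM, mulM_add_left, mulM_smul_left, mulM_dg, mulM_dg,
        muld_add_left, muld_one, muld_smul_left]
    have exR : mulM (ε • H' + (dg om + dg p.2)) (oneM + p.1) =
        ε • mulM H' (oneM + p.1) + ((dg om + dmul om p.1) + (dg p.2 + dmul p.2 p.1)) := by
      rw [mulM_add_left, mulM_add_left, mulM_smul_left, dg_mulM, dg_mulM,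
        dmul_add_right, dmul_one, dmul_add_right, dmul_one]
    rw [exL, exR]
    have final : ((dg om + muld p.1 om) + ε • muld (mulM G' (oneM + p.1)) om) -
        (ε • mulM H' (oneM + p.1) + ((dg om + dmul om p.1) + (dg p.2 + dmul p.2 p.1))) =
        (muld p.1 om - dmul om p.1 - dg p.2) -
          (dmul p.2 p.1 - (ε • muld (mulM G' (oneM + p.1)) om -
            ε • mulM H' (oneM + p.1))) := by abel
    rw [hL', sub_self] at final
    exact sub_eq_zero.mp final

-- ## rank ≤ 2 decomposition of singular matrices

def oth1 : Fin 3 → Fin 3 := ![1, 0, 0]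
def oth2 : Fin 3 → Fin 3 := ![2, 2, 1]

theorem oth1_ne (i0 : Fin 3) : oth1 i0 ≠ i0 := by fin_cases i0 <;> decide
theorem oth2_ne (i0 : Fin 3) : oth2 i0 ≠ i0 := by fin_cases i0 <;> decide
theorem oth1_ne_oth2 (i0 : Fin 3) : oth1 i0 ≠ oth2 i0 := by fin_cases i0 <;> decide

theorem sum3 (i0 : Fin 3) (f : Fin 3 → Hq) :
    ∑ i, f i = f i0 + f (oth1 i0) + f (oth2 i0) := by
  fin_cases i0 <;> simp [oth1, oth2, Fin.sum_univ_three] <;> abel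

theorem trichot (i0 i : Fin 3) : i = i0 ∨ i = oth1 i0 ∨ i = oth2 i0 := by
  fin_cases i0 <;> fin_cases i <;> decide

theorem slice2 (M : Mat3) (w : Vec3) (hw : w ≠ 0)
    (hker : ∀ k, ∑ i, w i * M i k = 0) :
    ∃ p q x y : Vec3, ∀ i k, M i k = p i * x k + q i * y k := by
  have hex : ∃ i0, w i0 ≠ 0 := by
    by_contra hc
    push_neg at hc
    exact hw (funext fun i => hc i)
  obtain ⟨i0, hi0⟩ := hex
  obtain ⟨w', hw'⟩ : ∃ v : Vec3, v = fun i => (w i0)⁻¹ * w i := ⟨_, rfl⟩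
  have hw'i0 : w' i0 = 1 := by rw [hw']; exact inv_mul_cancel₀ hi0
  have hker' : ∀ k, ∑ i, w' i * M i k = 0 := by
    intro k
    rw [hw']
    have : ∀ i : Fin 3, (w i0)⁻¹ * w i * M i k = (w i0)⁻¹ * (w i * M i k) := fun i =>
      mul_assoc _ _ _
    rw [Finset.sum_congr rfl (fun i _ => this i), ← Finset.mul_sum, hker k, mul_zero]
  refine ⟨fun i => (if i = oth1 i0 then 1 else 0) - (if i = i0 then w' (oth1 i0) else 0),
    fun i => (if i = oth2 i0 then 1 else 0) - (if i = i0 then w' (oth2 i0) else 0),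
    fun k => M (oth1 i0) k, fun k => M (oth2 i0) k, ?_⟩
  intro i k
  beta_reduce
  rcases trichot i0 i with hi | hi | hi
  · subst hi
    rw [if_neg (Ne.symm (oth1_ne i)), if_neg (Ne.symm (oth2_ne i)), if_pos rfl, if_pos rfl]
    have h := hker' k
    rw [sum3 i, hw'i0, one_mul, add_assoc] at h
    rw [eq_neg_of_add_eq_zero_left h, neg_add]
    rw [zero_sub, zero_sub, neg_mul, neg_mul]
  · subst hi
    rw [if_pos rfl, if_neg (oth1_ne i0), if_neg (oth1_ne_oth2 i0),
      if_neg (oth1_ne i0)]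
    simp
  · subst hi
    rw [if_neg (Ne.symm (oth1_ne_oth2 i0)), if_neg (oth2_ne i0), if_pos rfl,
      if_neg (oth2_ne i0)]
    simp


theorem caseB (M : Fin 3 → Mat3)
    (h : ∀ j, ∃ w : Vec3, w ≠ 0 ∧ ∀ k, ∑ i, w i * (M j) i k = 0) :
    ∃ (a1 c1 a2 c2 : Fin 3 → Vec3) (b1 b2 : Fin 3 → Fin 3 → Hq),
      ∀ i j k, M j i k =
        (∑ l, a1 l i * b1 l j * c1 l k) + (∑ l, a2 l i * b2 l j * c2 l k) := by
  choose w hw hker using h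
  choose p q x y hpq using fun j => slice2 (M j) (w j) (hw j) (hker j)
  refine ⟨p, x, q, y, (fun l j => if j = l then 1 else 0),
    (fun l j => if j = l then 1 else 0), ?_⟩
  intro i j k
  simp only [mul_ite, ite_mul, mul_one, mul_zero, zero_mul, one_mul,
    Finset.sum_ite_eq, Finset.mem_univ, if_true]
  exact hpq j i k

-- ## invertibility of small perturbations of the identity

theorem norm_rowsum (w : Vec3) (A : Mat3) :
    ‖(fun k => ∑ i, w i * A i k : Vec3)‖ ≤ 3 * ‖w‖ * ‖A‖ := by
  have hw := norm_nonneg w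
  have hA := norm_nonneg A
  rw [pi_norm_le_iff_of_nonneg (by positivity)]
  intro k
  have hterm : ∀ i : Fin 3, ‖w i * A i k‖ ≤ ‖w‖ * ‖A‖ := fun i => by
    rw [norm_mul]
    exact mul_le_mul (ventry_le w i) (entry_le A i k) (norm_nonneg _) hw
  calc ‖∑ i, w i * A i k‖ ≤ ∑ i, ‖w i * A i k‖ := norm_sum_le _ _
    _ ≤ ∑ _i : Fin 3, ‖w‖ * ‖A‖ := Finset.sum_le_sum fun i _ => hterm i
    _ = 3 * ‖w‖ * ‖A‖ := by rw [Finset.sum_const]; simp; ring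

theorem invertible_of_small (A : Mat3) (h : 3 * ‖A‖ < 1) :
    ∃ N : Mat3, mulM (oneM + A) N = oneM ∧ mulM N (oneM + A) = oneM := by
  rcases dichotomy (oneM + A) with h1 | ⟨w, hw, hker⟩
  · exact h1
  · exfalso
    have hwk : ∀ k, w k = -(∑ i, w i * A i k) := by
      intro k
      have h0 := hker k
      have hsplit : ∑ i, w i * (oneM + A) i k = w k + ∑ i, w i * A i k := by
        have : ∀ i : Fin 3, w i * (oneM + A) i k = w i * oneM i k + w i * A i k := fun i => by
          simp [mul_add]
        rw [Finset.sum_congr rfl fun i _ => this i, Finset.sum_add_distrib]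
        congr 1
        simp [oneM, mul_ite, mul_one, mul_zero]
      rw [hsplit] at h0
      exact eq_neg_of_add_eq_zero_left h0
    have hww : w = -(fun k => ∑ i, w i * A i k : Vec3) := by
      funext k
      rw [Pi.neg_apply]
      exact hwk k
    have hn : ‖w‖ ≤ 3 * ‖w‖ * ‖A‖ := by
      calc ‖w‖ = ‖-(fun k => ∑ i, w i * A i k : Vec3)‖ := by rw [← hww]
        _ = ‖(fun k => ∑ i, w i * A i k : Vec3)‖ := norm_neg _
        _ ≤ 3 * ‖w‖ * ‖A‖ := norm_rowsum w A
    have hpos : 0 < ‖w‖ := norm_pos_iff.mpr hw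
    nlinarith [mul_lt_mul_of_pos_left h hpos]

-- ## the main case: first slice invertible

def bas (l : Fin 3) : Vec3 := fun i => if i = l then 1 else 0

theorem mulM_smul_right (r : ℝ) (A B : Mat3) : mulM A (r • B) = r • mulM A B := by
  funext i k
  simp only [mulM, Pi.smul_apply, Finset.smul_sum]
  exact Finset.sum_congr rfl fun j _ => by rw [mul_smul_comm]

theorem caseA (M : Fin 3 → Mat3) (N : Mat3)
    (h1 : mulM (M 0) N = oneM) (h2 : mulM N (M 0) = oneM) :
    ∃ (a1 c1 a2 c2 : Fin 3 → Vec3) (b1 b2 : Fin 3 → Fin 3 → Hq),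
      ∀ i j k, M j i k =
        (∑ l, a1 l i * b1 l j * c1 l k) + (∑ l, a2 l i * b2 l j * c2 l k) := by
  obtain ⟨G, hG⟩ : ∃ Z : Mat3, Z = mulM N (M 1) := ⟨_, rfl⟩
  obtain ⟨H, hH⟩ : ∃ Z : Mat3, Z = mulM N (M 2) := ⟨_, rfl⟩
  obtain ⟨Goff, hGoff⟩ : ∃ Z : Mat3, Z = fun i k => if i = k then 0 else G i k := ⟨_, rfl⟩
  obtain ⟨Hoff, hHoff⟩ : ∃ Z : Mat3, Z = fun i k => if i = k then 0 else H i k := ⟨_, rfl⟩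
  obtain ⟨ε, U, E, hε, hεsmall, hU, KEY⟩ := solveA Goff Hoff
  have hεne : ε ≠ 0 := ne_of_gt hε
  have h3U : 3 * ‖U‖ < 1 := by linarith
  obtain ⟨Vi, hVVi, hViV⟩ := invertible_of_small U h3U
  obtain ⟨X, hX⟩ : ∃ Z : Mat3, Z = oneM + ε • Goff := ⟨_, rfl⟩
  obtain ⟨Yh, hYh⟩ : ∃ Z : Mat3, Z = ε • Hoff + (dg om + dg E) := ⟨_, rfl⟩
  obtain ⟨A2, hA2⟩ : ∃ Z : Mat3, Z = mulM X (oneM + U) := ⟨_, rfl⟩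
  obtain ⟨A3, hA3⟩ : ∃ Z : Mat3, Z = mulM (M 0) A2 := ⟨_, rfl⟩
  obtain ⟨eq, heq⟩ : ∃ z : Hq, z = ((ε⁻¹ : ℝ) : Hq) := ⟨_, rfl⟩
  have KEY' : mulM A2 (dg om) = mulM Yh (oneM + U) := by rw [hA2, hX, hYh]; exact KEY
  have hA2Vi : mulM A2 Vi = X := by
    rw [hA2, mulM_assoc, hVVi, mulM_one]
  have hYhVi : mulM (mulM A2 (dg om)) Vi = Yh := by
    rw [KEY', mulM_assoc, hVVi, mulM_one]
  have hsc : ∀ z : Hq, eq * (ε • z) = z := by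
    intro z
    rw [heq, ← Quaternion.coe_mul_eq_smul, ← mul_assoc, ← Quaternion.coe_mul,
      inv_mul_cancel₀ hεne, Quaternion.coe_one, one_mul]
  have hcomm : ∀ z : Hq, z * eq = eq * z := by
    intro z; rw [heq, Quaternion.coe_commutes]
  have hM1 : mulM (M 0) G = M 1 := by
    rw [hG, ← mulM_assoc, h1, one_mulM]
  have hM2 : mulM (M 0) H = M 2 := by
    rw [hH, ← mulM_assoc, h1, one_mulM]
  have hGsplit : mulM (M 0) Goff + muld (M 0) (fun l => G l l) = M 1 := by
    rw [← hM1]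
    have hsp : G = Goff + dg (fun l => G l l) := by
      funext i k
      by_cases h : i = k
      · subst h; simp [hGoff, dg]
      · simp [hGoff, dg, h]
    conv_rhs => rw [hsp]
    rw [mulM_add_right, mulM_dg]
  have hHsplit : mulM (M 0) Hoff + muld (M 0) (fun l => H l l) = M 2 := by
    rw [← hM2]
    have hsp : H = Hoff + dg (fun l => H l l) := by
      funext i k
      by_cases h : i = k
      · subst h; simp [hHoff, dg]
      · simp [hHoff, dg, h]
    conv_rhs => rw [hsp]
    rw [mulM_add_right, mulM_dg]
  -- claim for the middle slice
  have claim1 : ∀ i k, M 0 i k * (G k k - eq) + eq * mulM (M 0) X i k = M 1 i k := by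
    intro i k
    have e1M : mulM (M 0) X = M 0 + ε • mulM (M 0) Goff := by
      rw [hX, mulM_add_right, mulM_one, mulM_smul_right]
    rw [e1M]
    simp only [Pi.add_apply, Pi.smul_apply]
    rw [mul_add, hsc (mulM (M 0) Goff i k), mul_sub, hcomm (M 0 i k)]
    have e3 : mulM (M 0) Goff i k + M 0 i k * G k k = M 1 i k := by
      have h4 := congrFun (congrFun hGsplit i) k
      simpa [muld] using h4
    calc M 0 i k * G k k - eq * M 0 i k + (eq * M 0 i k + mulM (M 0) Goff i k)
        = mulM (M 0) Goff i k + M 0 i k * G k k := by abel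
      _ = M 1 i k := e3
  -- claim for the last slice
  have claim2 : ∀ i k,
      M 0 i k * (H k k - eq * (om k + E k)) + eq * mulM (M 0) Yh i k = M 2 i k := by
    intro i k
    have e1M : mulM (M 0) Yh = ε • mulM (M 0) Hoff + (muld (M 0) om + muld (M 0) E) := by
      rw [hYh, mulM_add_right, mulM_add_right, mulM_smul_right, mulM_dg, mulM_dg]
    rw [e1M]
    simp only [Pi.add_apply, Pi.smul_apply, muld]
    have r1 : eq * (ε • mulM (M 0) Hoff i k + (M 0 i k * om k + M 0 i k * E k)) =
        mulM (M 0) Hoff i k + (eq * (M 0 i k * om k) + eq * (M 0 i k * E k)) := by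
      rw [mul_add eq, hsc (mulM (M 0) Hoff i k), mul_add eq]
    have r2 : M 0 i k * (H k k - eq * (om k + E k)) =
        M 0 i k * H k k - (eq * (M 0 i k * om k) + eq * (M 0 i k * E k)) := by
      rw [mul_sub]
      congr 1
      rw [← mul_assoc, hcomm (M 0 i k), mul_assoc, mul_add (M 0 i k) (om k) (E k),
        mul_add eq]
    rw [r1, r2]
    have e3 : mulM (M 0) Hoff i k + M 0 i k * H k k = M 2 i k := by
      have h4 := congrFun (congrFun hHsplit i) k
      simpa [muld] using h4
    calc M 0 i k * H k k - (eq * (M 0 i k * om k) + eq * (M 0 i k * E k)) +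
          (mulM (M 0) Hoff i k + (eq * (M 0 i k * om k) + eq * (M 0 i k * E k)))
        = mulM (M 0) Hoff i k + M 0 i k * H k k := by abel
      _ = M 2 i k := e3
  -- sum computations
  have hA3Vi : mulM A3 Vi = mulM (M 0) X := by rw [hA3, mulM_assoc, hA2Vi]
  have hA3omVi : mulM (mulM A3 (dg om)) Vi = mulM (M 0) Yh := by
    rw [hA3, mulM_assoc (M 0) A2 (dg om), mulM_assoc, hYhVi]
  have hsum1 : ∀ i k, (∑ m, A3 i m * eq * Vi m k) = eq * mulM (M 0) X i k := by
    intro i k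
    have e : ∀ m : Fin 3, A3 i m * eq * Vi m k = eq * (A3 i m * Vi m k) := fun m => by
      rw [hcomm (A3 i m), mul_assoc]
    rw [Finset.sum_congr rfl fun m _ => e m, ← Finset.mul_sum, ← hA3Vi]
    rfl
  have hsum2 : ∀ i k, (∑ m, A3 i m * (eq * om m) * Vi m k) = eq * mulM (M 0) Yh i k := by
    intro i k
    have e : ∀ m : Fin 3, A3 i m * (eq * om m) * Vi m k =
        eq * (A3 i m * om m * Vi m k) := fun m => by
      rw [← mul_assoc (A3 i m) eq (om m), hcomm (A3 i m), mul_assoc eq (A3 i m) (om m),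
        mul_assoc]
    rw [Finset.sum_congr rfl fun m _ => e m, ← Finset.mul_sum, ← hA3omVi]
    congr 1
    rw [mulM_dg]
    rfl
  have hbas1 : ∀ (v : Fin 3 → Hq) (i k : Fin 3),
      (∑ l, M 0 i l * v l * bas l k) = M 0 i k * v k := by
    intro v i k
    simp [bas, mul_ite, mul_one, mul_zero, Finset.sum_ite_eq]
  refine ⟨fun l i => M 0 i l, bas, fun m i => A3 i m, fun m k => Vi m k,
    (fun l j => if j = 0 then 1 else if j = 1 then G l l - eq
      else H l l - eq * (om l + E l)),
    (fun m j => if j = 0 then 0 else if j = 1 then eq else eq * om m), ?_⟩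
  intro i j k
  fin_cases j
  · -- j = 0
    simp only [Fin.reduceFinMk, Fin.isValue, Fin.reduceEq, ↓reduceIte, Fin.zero_eta]
    rw [hbas1 (fun _ => 1) i k, mul_one]
    simp [mul_zero, zero_mul]
  · -- j = 1
    simp only [Fin.reduceFinMk, Fin.isValue, Fin.reduceEq, ↓reduceIte, Fin.mk_one]
    rw [hbas1 (fun l => G l l - eq) i k, hsum1 i k]
    exact (claim1 i k).symm
  · -- j = 2
    simp only [Fin.reduceFinMk, Fin.isValue, Fin.reduceEq, ↓reduceIte]
    rw [hbas1 (fun l => H l l - eq * (om l + E l)) i k, hsum2 i k]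
    exact (claim2 i k).symm

end R6

/-- An `n₁ × n₂ × n₃` quaternion tensor has rank at most `r` if it is a sum of
`r` simple tensors. -/
def HasRankLE {n₁ n₂ n₃ : ℕ} (r : ℕ) (T : Fin n₁ → Fin n₂ → Fin n₃ → Quaternion ℝ) : Prop :=
  ∃ (a : Fin r → Fin n₁ → Quaternion ℝ) (b : Fin r → Fin n₂ → Quaternion ℝ)
    (c : Fin r → Fin n₃ → Quaternion ℝ),
    ∀ i j k, T i j k = ∑ l : Fin r, a l i * b l j * c l k

namespace R6

theorem rank6_of_two (T : Fin 3 → Fin 3 → Fin 3 → Quaternion ℝ)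
    (a1 c1 a2 c2 : Fin 3 → Vec3) (b1 b2 : Fin 3 → Fin 3 → Hq)
    (h : ∀ i j k, T i j k =
      (∑ l, a1 l i * b1 l j * c1 l k) + (∑ l, a2 l i * b2 l j * c2 l k)) :
    HasRankLE 6 T := by
  refine ⟨fun l => Sum.elim a1 a2 (finSumFinEquiv.symm l),
    fun l => Sum.elim b1 b2 (finSumFinEquiv.symm l),
    fun l => Sum.elim c1 c2 (finSumFinEquiv.symm l), ?_⟩
  intro i j k
  rw [h i j k]
  rw [← Equiv.sum_comp (finSumFinEquiv : Fin 3 ⊕ Fin 3 ≃ Fin 6)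
    (fun l => Sum.elim a1 a2 (finSumFinEquiv.symm l) i *
      Sum.elim b1 b2 (finSumFinEquiv.symm l) j *
      Sum.elim c1 c2 (finSumFinEquiv.symm l) k)]
  rw [Fintype.sum_sum_type]
  simp [Equiv.symm_apply_apply]

end R6

theorem rank_le_six_333 (T : Fin 3 → Fin 3 → Fin 3 → Quaternion ℝ) :
    HasRankLE 6 T := by
  obtain ⟨Ms, hMs⟩ : ∃ M : Fin 3 → Mat3, M = fun j i k => T i j k := ⟨_, rfl⟩
  have hT : ∀ i j k, T i j k = Ms j i k := by
    intro i j k; rw [hMs]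
  rcases R6.dichotomy (Ms 0) with ⟨N0, hN0a, hN0b⟩ | hker0
  · obtain ⟨a1, c1, a2, c2, b1, b2, hh⟩ := R6.caseA Ms N0 hN0a hN0b
    exact R6.rank6_of_two T a1 c1 a2 c2 b1 b2
      (fun i j k => by rw [hT i j k]; exact hh i j k)
  · rcases R6.dichotomy (Ms 1) with ⟨N1, hN1a, hN1b⟩ | hker1
    · obtain ⟨M', hM'⟩ : ∃ Z : Fin 3 → Mat3,
          Z = fun j : Fin 3 => if j = 0 then Ms 1 else if j = 1 then Ms 0 else Ms 2 :=
        ⟨_, rfl⟩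
      have h0 : M' 0 = Ms 1 := by rw [hM']; simp
      obtain ⟨a1, c1, a2, c2, b1, b2, hh⟩ := R6.caseA M' N1
        (by rw [h0]; exact hN1a) (by rw [h0]; exact hN1b)
      obtain ⟨σ, hσ⟩ : ∃ f : Fin 3 → Fin 3,
          f = fun j : Fin 3 => if j = 0 then 1 else if j = 1 then 0 else 2 := ⟨_, rfl⟩
      have hMsj : ∀ j, Ms j = M' (σ j) := by
        intro j
        fin_cases j <;> simp [hM', hσ]
      refine R6.rank6_of_two T a1 c1 a2 c2 (fun l j => b1 l (σ j))
        (fun l j => b2 l (σ j)) ?_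
      intro i j k
      rw [hT i j k, hMsj j]
      exact hh i (σ j) k
    · rcases R6.dichotomy (Ms 2) with ⟨N2, hN2a, hN2b⟩ | hker2
      · obtain ⟨M', hM'⟩ : ∃ Z : Fin 3 → Mat3,
            Z = fun j : Fin 3 => if j = 0 then Ms 2 else if j = 1 then Ms 1 else Ms 0 :=
          ⟨_, rfl⟩
        have h0 : M' 0 = Ms 2 := by rw [hM']; simp
        obtain ⟨a1, c1, a2, c2, b1, b2, hh⟩ := R6.caseA M' N2
          (by rw [h0]; exact hN2a) (by rw [h0]; exact hN2b)
        obtain ⟨σ, hσ⟩ : ∃ f : Fin 3 → Fin 3,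
            f = fun j : Fin 3 => if j = 0 then 2 else if j = 1 then 1 else 0 := ⟨_, rfl⟩
        have hMsj : ∀ j, Ms j = M' (σ j) := by
          intro j
          fin_cases j <;> simp [hM', hσ]
        refine R6.rank6_of_two T a1 c1 a2 c2 (fun l j => b1 l (σ j))
          (fun l j => b2 l (σ j)) ?_
        intro i j k
        rw [hT i j k, hMsj j]
        exact hh i (σ j) k
      · obtain ⟨a1, c1, a2, c2, b1, b2, hh⟩ := R6.caseB Ms (by
          intro j
          fin_cases j
          · exact hker0
          · exact hker1
          · exact hker2)
        exact R6.rank6_of_two T a1 c1 a2 c2 b1 b2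
          (fun i j k => by rw [hT i j k]; exact hh i j k)
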